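/- Let n ∈ ℕ and g, h : Fin n → ℕ with g i ≤ h i for every i, and let Q be a subset of the box ∀ i, Fin (h i). Then Q has a g-cover (a family b with b i : Fin (g i) → Fin (h i) such that every q ∈ Q satisfies q i = b i j for some i and j) if and only if the complement of Q in the box contains a combinatorial prism of measurements (fun i => h i − g i). -/

import Mathlib

/-- A subset `Q` of the box `∀ i, Fin (h i)` has a `g`-cover if and only if
its complement contains a combinatorial prism of measurements `h i - g i`. -/
theorem cover_iff_complement_prism (n : ℕ) (g h : Fin n → ℕ)
    (hgh : ∀ i, g i ≤ h i) (Q : Set (∀ i : Fin n, Fin (h i))) :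
    (∃ b : ∀ i : Fin n, Fin (g i) → Fin (h i),
        ∀ q ∈ Q, ∃ (i : Fin n) (j : Fin (g i)), q i = b i j) ↔
      ∃ Z : ∀ i : Fin n, Finset (Fin (h i)),
        (∀ i, (Z i).card = h i - g i) ∧
        ∀ q : ∀ i : Fin n, Fin (h i), (∀ i, q i ∈ Z i) → q ∉ Q := by
  constructor
  · rintro ⟨b, hb⟩
    have key : ∀ i : Fin n, ∃ Z : Finset (Fin (h i)),
        Z.card = h i - g i ∧ ∀ x ∈ Z, ∀ j, x ≠ b i j := by
      intro i
      have hle : (h i - g i) ≤ ((Finset.univ.image (b i))ᶜ : Finset (Fin (h i))).card := by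
        have h1 : (Finset.univ.image (b i)).card ≤ g i := by
          calc (Finset.univ.image (b i)).card
              ≤ (Finset.univ : Finset (Fin (g i))).card := Finset.card_image_le
            _ = g i := by simp
        have h2 := Finset.card_compl (Finset.univ.image (b i))
        simp only [Fintype.card_fin] at h2
        omega
      obtain ⟨t, ht, htc⟩ := Finset.exists_subset_card_eq hle
      refine ⟨t, htc, fun x hx j he => ?_⟩
      have hx' := ht hx
      rw [Finset.mem_compl] at hx'
      exact hx' (Finset.mem_image.mpr ⟨j, Finset.mem_univ j, he.symm⟩)
    choose Z hZc hZ using key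
    refine ⟨Z, hZc, fun q hq hQ => ?_⟩
    obtain ⟨i, j, hij⟩ := hb q hQ
    exact hZ i (q i) (hq i) j hij
  · rintro ⟨Z, hZc, hZ⟩
    have hcard : ∀ i, ((Z i)ᶜ).card = g i := by
      intro i
      have h1 := Finset.card_compl (Z i)
      simp only [Fintype.card_fin] at h1
      have := hgh i
      rw [h1, hZc i]
      omega
    refine ⟨fun i j => ((Z i)ᶜ.equivFin.symm (Fin.cast (hcard i).symm j)).1, ?_⟩
    intro q hq
    by_contra hc
    push_neg at hc
    apply hZ q ?_ hq
    intro i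
    by_contra hqi
    have hmem : q i ∈ (Z i)ᶜ := Finset.mem_compl.mpr hqi
    refine hc i (Fin.cast (hcard i) ((Z i)ᶜ.equivFin ⟨q i, hmem⟩)) ?_
    simp
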